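/- Doob–Dynkin direction of value sufficiency: let (Ω, F, μ) be a probability space, let S : Ω → 𝒮 and G : Ω → 𝒢 be random variables into standard Borel spaces, let φ : 𝒮 × 𝒢 → 𝒵 be measurable into a standard Borel space 𝒵 and v : 𝒮 × 𝒢 → ℝ be measurable, and set Z := φ(S,G), V := v(S,G). If V and G are conditionally independent given the σ-algebra generated by (S,Z), then there exists a measurable function ṽ : 𝒮 × 𝒵 → ℝ such that V = ṽ(S,Z) μ-almost surely. -/

import Mathlib

open scoped Classical
open MeasureTheory

/-- Auxiliary lemma: if `Y` is the indicator of a set `T` which is measurable with respect to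
`m₁ ⊔ σ(G)`, and `Y` is conditionally independent of `G` given `m₁` (in the factorization
sense below), then `Y` is a.e. equal to its conditional expectation given `m₁`. -/
theorem aux_indicator_ae_eq_condexp {Ω 𝒢 : Type*} (m₁ : MeasurableSpace Ω)
    [m0 : MeasurableSpace Ω]
    [MeasurableSpace 𝒢]
    (μ : Measure Ω) [IsProbabilityMeasure μ]
    (hm : m₁ ≤ m0)
    {G : Ω → 𝒢} (hG : Measurable G)
    (Y : Ω → ℝ) (T : Set Ω)
    (hYdef : Y = T.indicator (fun _ => (1 : ℝ)))
    (hTm' : MeasurableSet[m₁ ⊔ MeasurableSpace.comap G inferInstance] T)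
    (hCI : ∀ B₂ : Set 𝒢, MeasurableSet B₂ →
      μ[fun ω => Y ω * (if G ω ∈ B₂ then (1 : ℝ) else 0) | m₁] =ᵐ[μ]
        fun ω => ((μ[Y | m₁]) ω) *
          ((μ[fun ω' => if G ω' ∈ B₂ then (1 : ℝ) else 0 | m₁]) ω)) :
    Y =ᵐ[μ] μ[Y | m₁] := by
  have hm' : m₁ ⊔ MeasurableSpace.comap G inferInstance ≤ m0 :=
    sup_le hm (measurable_iff_comap_le.mp hG)
  have hTamb : MeasurableSet T := hm' _ hTm'
  have hYsm : StronglyMeasurable[m₁ ⊔ MeasurableSpace.comap G inferInstance] Y := by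
    rw [hYdef]
    exact stronglyMeasurable_const.indicator hTm'
  have hYint : Integrable Y μ := by
    rw [hYdef]
    exact (integrable_const (1 : ℝ)).indicator hTamb
  have hYbound : ∀ x, ‖Y x‖ ≤ 1 := by
    intro x
    rw [hYdef]
    by_cases hx : x ∈ T <;> simp [Set.indicator_apply, hx]
  -- the indicator of `G ∈ B`
  have hχeq : ∀ B : Set 𝒢, (fun ω => if G ω ∈ B then (1 : ℝ) else 0)
      = (G ⁻¹' B).indicator (fun _ => (1 : ℝ)) := by
    intro B
    funext ω
    by_cases hω : G ω ∈ B <;> simp [Set.indicator_apply, hω]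
  have hχint : ∀ B : Set 𝒢, MeasurableSet B →
      Integrable (fun ω => if G ω ∈ B then (1 : ℝ) else 0) μ := by
    intro B hB
    rw [hχeq B]
    exact (integrable_const (1 : ℝ)).indicator (hG hB)
  have hχbound : ∀ (B : Set 𝒢) (x : Ω), ‖(if G x ∈ B then (1 : ℝ) else 0)‖ ≤ 1 := by
    intro B x
    by_cases hx : G x ∈ B <;> simp [hx]
  -- the π-system generating `m'`
  set 𝒞 : Set (Set Ω) :=
    {t | ∃ A, MeasurableSet[m₁] A ∧ ∃ B, MeasurableSet B ∧ t = A ∩ G ⁻¹' B} with h𝒞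
  have h_eq : m₁ ⊔ MeasurableSpace.comap G inferInstance = MeasurableSpace.generateFrom 𝒞 := by
    apply le_antisymm
    · refine sup_le ?_ ?_
      · intro s hs
        exact MeasurableSpace.measurableSet_generateFrom
          ⟨s, hs, Set.univ, MeasurableSet.univ, by simp⟩
      · intro s hs
        obtain ⟨B, hB, rfl⟩ := hs
        exact MeasurableSpace.measurableSet_generateFrom
          ⟨Set.univ, MeasurableSet.univ, B, hB, by simp⟩
    · refine MeasurableSpace.generateFrom_le ?_
      rintro t ⟨A, hA, B, hB, rfl⟩
      have h1 : MeasurableSet[m₁ ⊔ MeasurableSpace.comap G inferInstance] A :=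
        (le_sup_left : m₁ ≤ m₁ ⊔ MeasurableSpace.comap G inferInstance) A hA
      have h2 : MeasurableSet[m₁ ⊔ MeasurableSpace.comap G inferInstance] (G ⁻¹' B) :=
        (le_sup_right :
          MeasurableSpace.comap G inferInstance ≤ m₁ ⊔ MeasurableSpace.comap G inferInstance)
          _ ⟨B, hB, rfl⟩
      exact h1.inter h2
  have h_pi : IsPiSystem 𝒞 := by
    rintro t1 ⟨A1, hA1, B1, hB1, rfl⟩ t2 ⟨A2, hA2, B2, hB2, rfl⟩ -
    refine ⟨A1 ∩ A2, hA1.inter hA2, B1 ∩ B2, hB1.inter hB2, ?_⟩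
    ext x
    simp only [Set.mem_inter_iff, Set.mem_preimage, Set.mem_inter_iff]
    tauto
  -- the key set-integral identity
  have hsetEq : ∀ s : Set Ω, MeasurableSet[m₁ ⊔ MeasurableSpace.comap G inferInstance] s →
      ∫ x in s, (μ[Y | m₁]) x ∂μ = ∫ x in s, Y x ∂μ := by
    have hbasic : ∀ t ∈ 𝒞, ∫ x in t, (μ[Y | m₁]) x ∂μ = ∫ x in t, Y x ∂μ := by
      rintro t ⟨A, hA, B, hB, rfl⟩
      have hAamb : MeasurableSet A := hm _ hA
      set χ : Ω → ℝ := fun ω => if G ω ∈ B then (1 : ℝ) else 0 with hχ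
      have hχi : Integrable χ μ := hχint B hB
      have hind : ∀ (f : Ω → ℝ) (x : Ω), (G ⁻¹' B).indicator f x = f x * χ x := by
        intro f x
        by_cases hx : G x ∈ B <;> simp [Set.indicator_apply, hχ, hx]
      -- integrability of products
      have hint1 : Integrable (fun x => (μ[Y | m₁]) x * χ x) μ := by
        have h := Integrable.bdd_mul (f := χ) (g := μ[Y | m₁])
          integrable_condExp (hχi.aestronglyMeasurable) (ae_of_all _ (hχbound B))
        exact h.congr (Filter.Eventually.of_forall fun x => mul_comm _ _)
      have hint2 : Integrable (fun x => Y x * χ x) μ :=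
        Integrable.bdd_mul (f := Y) (g := χ) hχi
          (hYint.aestronglyMeasurable) (ae_of_all _ hYbound)
      have hpull : μ[fun x => (μ[Y | m₁]) x * χ x | m₁]
          =ᵐ[μ] fun x => (μ[Y | m₁]) x * (μ[χ | m₁]) x := by
        have := condExp_mul_of_stronglyMeasurable_left (m := m₁) (μ := μ)
          (f := μ[Y | m₁]) (g := χ) stronglyMeasurable_condExp hint1 hχi
        exact this
      have hCIB := hCI B hB
      calc ∫ x in A ∩ G ⁻¹' B, (μ[Y | m₁]) x ∂μ
          = ∫ x in A, (G ⁻¹' B).indicator (μ[Y | m₁]) x ∂μ :=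
            (setIntegral_indicator (hG hB)).symm
        _ = ∫ x in A, (μ[Y | m₁]) x * χ x ∂μ := by simp only [hind]
        _ = ∫ x in A, (μ[fun x => (μ[Y | m₁]) x * χ x | m₁]) x ∂μ :=
            (setIntegral_condExp hm hint1 hA).symm
        _ = ∫ x in A, (μ[Y | m₁]) x * (μ[χ | m₁]) x ∂μ :=
            setIntegral_congr_ae hAamb (hpull.mono fun x hx _ => hx)
        _ = ∫ x in A, (μ[fun x => Y x * χ x | m₁]) x ∂μ :=
            (setIntegral_congr_ae hAamb (hCIB.mono fun x hx _ => hx)).symm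
        _ = ∫ x in A, Y x * χ x ∂μ := setIntegral_condExp hm hint2 hA
        _ = ∫ x in A, (G ⁻¹' B).indicator Y x ∂μ := by simp only [hind]
        _ = ∫ x in A ∩ G ⁻¹' B, Y x ∂μ := setIntegral_indicator (hG hB)
    have hempty : ∫ x in (∅ : Set Ω), (μ[Y | m₁]) x ∂μ = ∫ x in (∅ : Set Ω), Y x ∂μ := by
      simp
    have hcompl : ∀ t : Set Ω,
        MeasurableSet[m₁ ⊔ MeasurableSpace.comap G inferInstance] t →
        (∫ x in t, (μ[Y | m₁]) x ∂μ = ∫ x in t, Y x ∂μ) →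
        ∫ x in tᶜ, (μ[Y | m₁]) x ∂μ = ∫ x in tᶜ, Y x ∂μ := by
      intro t ht h
      have htamb : MeasurableSet t := hm' _ ht
      have htot : ∫ x, (μ[Y | m₁]) x ∂μ = ∫ x, Y x ∂μ := integral_condExp hm
      rw [setIntegral_compl htamb integrable_condExp, setIntegral_compl htamb hYint, htot, h]
    have hunion : ∀ f : ℕ → Set Ω, Pairwise (Function.onFun Disjoint f) →
        (∀ i, MeasurableSet[m₁ ⊔ MeasurableSpace.comap G inferInstance] (f i)) →
        (∀ i, ∫ x in f i, (μ[Y | m₁]) x ∂μ = ∫ x in f i, Y x ∂μ) →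
        ∫ x in ⋃ i, f i, (μ[Y | m₁]) x ∂μ = ∫ x in ⋃ i, f i, Y x ∂μ := by
      intro f hd hmeas hC
      rw [integral_iUnion (fun i => hm' _ (hmeas i)) hd integrable_condExp.integrableOn,
        integral_iUnion (fun i => hm' _ (hmeas i)) hd hYint.integrableOn]
      exact tsum_congr hC
    intro s hs
    exact MeasurableSpace.induction_on_inter
      (m := m₁ ⊔ MeasurableSpace.comap G inferInstance) (C := fun t _ => ∫ x in t, (μ[Y | m₁]) x ∂μ = ∫ x in t, Y x ∂μ) h_eq h_pi hempty hbasic hcompl hunion s hs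
  -- conclude
  have h2 : μ[Y | m₁] =ᵐ[μ] μ[Y | m₁ ⊔ MeasurableSpace.comap G inferInstance] :=
    ae_eq_condExp_of_forall_setIntegral_eq hm' hYint
      (fun s _ _ => integrable_condExp.integrableOn)
      (fun s hs _ => hsetEq s hs)
      ((stronglyMeasurable_condExp (m := m₁) (f := Y) (μ := μ)).aestronglyMeasurable.mono le_sup_left)
  have h3 : μ[Y | m₁ ⊔ MeasurableSpace.comap G inferInstance] = Y :=
    condExp_of_stronglyMeasurable hm' hYsm hYint
  rw [h3] at h2
  exact h2.symm

/-- **Doob–Dynkin direction of value sufficiency.** With `Z := φ(S,G)` and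
`V := v(S,G)`, if `V` and `G` are conditionally independent given `σ(S,Z)` (in the sense
that conditional expectations of products of indicators factorize a.s.), then there is a
measurable `ṽ : 𝒮 × 𝒵 → ℝ` with `V = ṽ(S,Z)` μ-a.s. -/
theorem exists_measurable_factorization_of_condIndep {Ω 𝒮 𝒢 𝒵 : Type*}
    [MeasurableSpace Ω]
    [MeasurableSpace 𝒮] [StandardBorelSpace 𝒮]
    [MeasurableSpace 𝒢] [StandardBorelSpace 𝒢]
    [MeasurableSpace 𝒵] [StandardBorelSpace 𝒵]
    (μ : Measure Ω) [IsProbabilityMeasure μ]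
    (S : Ω → 𝒮) (G : Ω → 𝒢) (φ : 𝒮 × 𝒢 → 𝒵) (v : 𝒮 × 𝒢 → ℝ)
    (hS : Measurable S) (hG : Measurable G) (hφ : Measurable φ) (hv : Measurable v)
    (mSZ : MeasurableSpace Ω)
    (hSZ : mSZ = MeasurableSpace.comap (fun ω => (S ω, φ (S ω, G ω))) inferInstance)
    (hCI : ∀ (B₁ : Set ℝ) (B₂ : Set 𝒢), MeasurableSet B₁ → MeasurableSet B₂ →
      μ[fun ω => (if v (S ω, G ω) ∈ B₁ then (1 : ℝ) else 0) *
          (if G ω ∈ B₂ then (1 : ℝ) else 0) | mSZ] =ᵐ[μ]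
        fun ω => ((μ[fun ω' => if v (S ω', G ω') ∈ B₁ then (1 : ℝ) else 0 | mSZ]) ω) *
          ((μ[fun ω' => if G ω' ∈ B₂ then (1 : ℝ) else 0 | mSZ]) ω)) :
    ∃ vTilde : 𝒮 × 𝒵 → ℝ, Measurable vTilde ∧
      ∀ᵐ ω ∂μ, v (S ω, G ω) = vTilde (S ω, φ (S ω, G ω)) := by
  subst hSZ
  have hp := hS.prodMk (hφ.comp (hS.prodMk hG))
  have hm : MeasurableSpace.comap (fun ω => (S ω, φ (S ω, G ω))) inferInstance ≤ _ :=
    measurable_iff_comap_le.mp hp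
  -- measurability of S with respect to MeasurableSpace.comap (fun ω => (S ω, φ (S ω, G ω))) inferInstance
  have hSm1 : Measurable[MeasurableSpace.comap (fun ω => (S ω, φ (S ω, G ω))) inferInstance] S :=
    measurable_fst.comp (comap_measurable _)
  have hGm' : Measurable[MeasurableSpace.comap (fun ω => (S ω, φ (S ω, G ω))) inferInstance ⊔ MeasurableSpace.comap G inferInstance] G :=
    (comap_measurable G).mono le_sup_right le_rfl
  have hVm' : Measurable[MeasurableSpace.comap (fun ω => (S ω, φ (S ω, G ω))) inferInstance ⊔ MeasurableSpace.comap G inferInstance]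
      (fun ω => v (S ω, G ω)) :=
    hv.comp ((hSm1.mono le_sup_left le_rfl).prodMk hGm')
  -- the indicator functions at rational levels
  set Y : ℚ → Ω → ℝ :=
    fun q ω => if v (S ω, G ω) ∈ Set.Iic ((q : ℝ)) then (1 : ℝ) else 0 with hY
  set T : ℚ → Set Ω := fun q => (fun ω => v (S ω, G ω)) ⁻¹' Set.Iic ((q : ℝ)) with hT
  have hYdef : ∀ q, Y q = (T q).indicator (fun _ => (1 : ℝ)) := by
    intro q
    funext ω
    by_cases h : v (S ω, G ω) ≤ (q : ℝ) <;>
      simp [hY, hT, Set.indicator_apply, Set.mem_preimage, Set.mem_Iic, h]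
  have hTm' : ∀ q, MeasurableSet[MeasurableSpace.comap (fun ω => (S ω, φ (S ω, G ω))) inferInstance ⊔ MeasurableSpace.comap G inferInstance] (T q) :=
    fun q => hVm' measurableSet_Iic
  have key : ∀ q : ℚ, Y q =ᵐ[μ] μ[Y q | MeasurableSpace.comap (fun ω => (S ω, φ (S ω, G ω))) inferInstance] := by
    intro q
    refine aux_indicator_ae_eq_condexp (MeasurableSpace.comap (fun ω => (S ω, φ (S ω, G ω))) inferInstance) μ hm hG (Y q) (T q) (hYdef q) (hTm' q) ?_
    intro B hB
    exact hCI (Set.Iic ((q : ℝ))) B measurableSet_Iic hB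
  -- the MeasurableSpace.comap (fun ω => (S ω, φ (S ω, G ω))) inferInstance-measurable sets where the conditional expectation equals 1
  have hAmeas : ∀ q : ℚ, MeasurableSet[MeasurableSpace.comap (fun ω => (S ω, φ (S ω, G ω))) inferInstance] ((μ[Y q | MeasurableSpace.comap (fun ω => (S ω, φ (S ω, G ω))) inferInstance]) ⁻¹' {1}) := fun q =>
    (stronglyMeasurable_condExp (m := MeasurableSpace.comap (fun ω => (S ω, φ (S ω, G ω))) inferInstance) (f := Y q)).measurable (measurableSet_singleton 1)
  have hAcomap : ∀ q : ℚ, ∃ Cq : Set (𝒮 × 𝒵), MeasurableSet Cq ∧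
      (fun ω => (S ω, φ (S ω, G ω))) ⁻¹' Cq = (μ[Y q | MeasurableSpace.comap (fun ω => (S ω, φ (S ω, G ω))) inferInstance]) ⁻¹' {1} := by
    intro q
    exact MeasurableSpace.measurableSet_comap.mp (hAmeas q)
  choose C hCmeas hCpre using hAcomap
  refine ⟨fun y => (⨅ q : ℚ, if y ∈ C q then ((q : ℝ) : EReal) else (⊤ : EReal)).toReal, ?_, ?_⟩
  · exact (Measurable.iInf fun q =>
      Measurable.ite (hCmeas q) measurable_const measurable_const).ereal_toReal
  · filter_upwards [ae_all_iff.mpr key] with ω hω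
    have hmem : ∀ q : ℚ, ((S ω, φ (S ω, G ω)) ∈ C q) ↔ v (S ω, G ω) ≤ (q : ℝ) := by
      intro q
      have h1 : (S ω, φ (S ω, G ω)) ∈ C q ↔ (μ[Y q | MeasurableSpace.comap (fun ω => (S ω, φ (S ω, G ω))) inferInstance]) ω = 1 := by
        constructor
        · intro h
          have : ω ∈ (fun ω => (S ω, φ (S ω, G ω))) ⁻¹' C q := h
          rw [hCpre q] at this
          exact this
        · intro h
          have : ω ∈ (μ[Y q | MeasurableSpace.comap (fun ω => (S ω, φ (S ω, G ω))) inferInstance]) ⁻¹' {1} := h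
          rw [← hCpre q] at this
          exact this
      rw [h1, ← hω q]
      by_cases h : v (S ω, G ω) ≤ (q : ℝ)
      · simp [hY, Set.mem_Iic, h]
      · simp [hY, Set.mem_Iic, h]
    have hInf : (⨅ q : ℚ, if (S ω, φ (S ω, G ω)) ∈ C q then ((q : ℝ) : EReal) else (⊤ : EReal))
        = ((v (S ω, G ω) : ℝ) : EReal) := by
      apply le_antisymm
      · by_contra h
        push_neg at h
        obtain ⟨q, hxq, hqi⟩ := EReal.exists_rat_btwn_of_lt h
        have hle : v (S ω, G ω) ≤ (q : ℝ) := le_of_lt (by exact_mod_cast hxq)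
        have hterm := iInf_le
          (fun q : ℚ => if (S ω, φ (S ω, G ω)) ∈ C q then ((q : ℝ) : EReal) else (⊤ : EReal)) q
        rw [if_pos ((hmem q).mpr hle)] at hterm
        exact absurd (lt_of_le_of_lt hterm hqi) (lt_irrefl _)
      · refine le_iInf fun q => ?_
        by_cases hq : v (S ω, G ω) ≤ (q : ℝ)
        · rw [if_pos ((hmem q).mpr hq)]
          exact_mod_cast hq
        · rw [if_neg (fun hc => hq ((hmem q).mp hc))]
          exact le_top
    rw [hInf]
    exact (EReal.toReal_coe _).symm
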